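/- If w ~ Gamma with density p(w) = w e^{-w} on (0,∞), then for every ξ ∈ ℝ, E[w · sinc(π w ξ)^2] = 2/(4π²ξ² + 1), where sinc(x) = sin(x)/x (with sinc(0) = 1). -/

import Mathlib

open MeasureTheory Real

/-- `sinc x = sin x / x`, with `sinc 0 = 1`. -/
noncomputable def sinc (x : ℝ) : ℝ := if x = 0 then 1 else Real.sin x / x

lemma integrable_exp_cos (b : ℝ) :
    IntegrableOn (fun x : ℝ => Real.exp (-x) * Real.cos (b * x)) (Set.Ioi 0) := by
  apply Integrable.mono (exp_neg_integrableOn_Ioi 0 one_pos)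
  · exact (Real.continuous_exp.comp continuous_neg).mul
      ((Real.continuous_cos.comp (continuous_const.mul continuous_id))) |>.aestronglyMeasurable
  · filter_upwards with x
    simp only [norm_mul, Real.norm_eq_abs, Real.abs_exp, neg_mul, one_mul]
    calc Real.exp (-x) * |Real.cos (b * x)| ≤ Real.exp (-x) * 1 := by
          gcongr; exact Real.abs_cos_le_one _
      _ = Real.exp (-x) := mul_one _

lemma integral_exp_cos (b : ℝ) :
    (∫ x in Set.Ioi (0 : ℝ), Real.exp (-x) * Real.cos (b * x)) = 1 / (1 + b ^ 2) := by
  have hb : (0:ℝ) < 1 + b ^ 2 := by positivity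
  set F : ℝ → ℝ := fun x => Real.exp (-x) * (b * Real.sin (b * x) - Real.cos (b * x)) / (1 + b ^ 2)
  have hderiv : ∀ x ∈ Set.Ioi (0:ℝ), HasDerivAt F (Real.exp (-x) * Real.cos (b * x)) x := by
    intro x _
    have h1 : HasDerivAt (fun x : ℝ => Real.exp (-x)) (-Real.exp (-x)) x := by
      simpa using (hasDerivAt_neg x).exp
    have hbx : HasDerivAt (fun y : ℝ => b * y) b x := by
      simpa using (hasDerivAt_id x).const_mul b
    have hs : HasDerivAt (fun x : ℝ => Real.sin (b * x)) (Real.cos (b * x) * b) x :=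
      (Real.hasDerivAt_sin (b * x)).comp x hbx
    have hc : HasDerivAt (fun x : ℝ => Real.cos (b * x)) (-Real.sin (b * x) * b) x :=
      (Real.hasDerivAt_cos (b * x)).comp x hbx
    have h2 : HasDerivAt (fun x : ℝ => b * Real.sin (b * x) - Real.cos (b * x))
        (b * (Real.cos (b * x) * b) - (-Real.sin (b * x) * b)) x := (hs.const_mul b).sub hc
    have := (h1.mul h2).div_const (1 + b ^ 2)
    refine this.congr_deriv ?_
    rw [div_eq_iff hb.ne']
    ring
  have hF0 : F 0 = -1 / (1 + b ^ 2) := by simp [F]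
  have htend : Filter.Tendsto F Filter.atTop (nhds 0) := by
    apply squeeze_zero_norm (a := fun x => Real.exp (-x) * (|b| + 1) / (1 + b ^ 2))
    · intro x
      simp only [F, norm_div, norm_mul, Real.norm_eq_abs, Real.abs_exp, abs_of_pos hb]
      gcongr
      calc |b * Real.sin (b * x) - Real.cos (b * x)| ≤ |b * Real.sin (b*x)| + |Real.cos (b*x)| :=
            abs_sub _ _
        _ ≤ |b| * 1 + 1 := by
            rw [abs_mul]
            gcongr
            exacts [Real.abs_sin_le_one _, Real.abs_cos_le_one _]
        _ = |b| + 1 := by ring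
    · have : Filter.Tendsto (fun x : ℝ => Real.exp (-x)) Filter.atTop (nhds 0) :=
        Real.tendsto_exp_neg_atTop_nhds_zero
      simpa using (this.mul_const (|b| + 1)).div_const (1 + b ^ 2)
  have hcont : ContinuousWithinAt F (Set.Ici 0) 0 := by
    apply Continuous.continuousWithinAt
    fun_prop
  have := integral_Ioi_of_hasDerivAt_of_tendsto hcont hderiv (integrable_exp_cos b) htend
  rw [this, hF0]
  ring

theorem Real.Gamma_three : Real.Gamma 3 = 2 := by
  have := Real.Gamma_nat_eq_factorial 2
  norm_num at this
  convert this using 2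
  norm_num

/-- If `w` has density `p(w) = w e^{-w}` on `(0,∞)`, then
`E[w · sinc(π w ξ)²] = 2/(4π²ξ² + 1)`. -/
theorem expectation_gamma_sinc_sq (ξ : ℝ) :
    (∫ w in Set.Ioi (0 : ℝ), (w * Real.exp (-w)) * (w * (_root_.sinc (π * w * ξ))^2)) =
      2 / (4 * π^2 * ξ^2 + 1) := by
  by_cases hξ : ξ = 0
  · subst hξ
    have h : ∀ w ∈ Set.Ioi (0:ℝ), (w * Real.exp (-w)) * (w * (_root_.sinc (π * w * 0))^2)
        = Real.exp (-w) * w ^ ((3:ℝ) - 1) := by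
      intro w hw
      rw [mul_zero, show _root_.sinc 0 = 1 by simp [_root_.sinc], one_pow, mul_one,
        show (3:ℝ) - 1 = ((2:ℕ):ℝ) by norm_num, Real.rpow_natCast]
      ring
    rw [setIntegral_congr_fun measurableSet_Ioi h,
      ← Real.Gamma_eq_integral (by norm_num : (0:ℝ) < 3), Real.Gamma_three]
    norm_num
  · set a := π * ξ with ha
    have hπ := Real.pi_ne_zero
    have haz : a ≠ 0 := mul_ne_zero hπ hξ
    have h : ∀ w ∈ Set.Ioi (0:ℝ), (w * Real.exp (-w)) * (w * (_root_.sinc (π * w * ξ))^2)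
        = (1 / (2 * a^2)) * Real.exp (-w) - (1 / (2 * a^2)) * (Real.exp (-w) * Real.cos (2 * a * w)) := by
      intro w hw
      have hwz : w ≠ 0 := ne_of_gt hw
      have hne : π * w * ξ ≠ 0 := by
        exact mul_ne_zero (mul_ne_zero hπ hwz) hξ
      rw [_root_.sinc, if_neg hne]
      have hsin2 : Real.sin (π * w * ξ) ^ 2 = (1 - Real.cos (2 * a * w)) / 2 := by
        rw [Real.sin_sq, Real.cos_sq, show 2 * (π * w * ξ) = 2 * a * w by rw [ha]; ring]
        ring
      rw [div_pow, hsin2]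
      have hpw : (π * w * ξ) ^ 2 = a ^ 2 * w ^ 2 := by rw [ha]; ring
      rw [hpw]
      field_simp
    rw [setIntegral_congr_fun measurableSet_Ioi h]
    have hi1 : IntegrableOn (fun w : ℝ => (1 / (2 * a^2)) * Real.exp (-w)) (Set.Ioi 0) :=
      (exp_neg_integrableOn_Ioi 0 one_pos).congr_fun (by intro x _; simp [neg_mul, one_mul]) measurableSet_Ioi |>.const_mul _
    have hi2 : IntegrableOn (fun w : ℝ => (1 / (2 * a^2)) * (Real.exp (-w) * Real.cos (2 * a * w))) (Set.Ioi 0) :=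
      (integrable_exp_cos (2 * a)).const_mul _
    rw [integral_sub hi1 hi2, integral_const_mul, integral_const_mul, integral_exp_cos,
      integral_exp_neg_Ioi_zero]
    have h2a : (1:ℝ) + (2*a)^2 = 4 * π^2 * ξ^2 + 1 := by rw [ha]; ring
    rw [h2a]
    have hd : (4 * π^2 * ξ^2 + 1 : ℝ) ≠ 0 := by positivity
    have ha2 : a ^ 2 ≠ 0 := pow_ne_zero _ haz
    field_simp
    rw [ha]
    ring
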